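/- If G is a daisy (a connected graph obtained from k ≥ 2 disjoint cycles by identifying one vertex from each cycle into a single vertex) of order n, then γ_t^d(G) ≤ (n−1)/2. -/

import Mathlib

open SimpleGraph

def IsDTDSet {V : Type*} (G : SimpleGraph V) (S : Finset V) : Prop :=
  ∀ v : V, (∃ u ∈ S, G.Adj v u) ∨
    ∃ u ∈ S, ∃ w ∈ S, u ≠ w ∧ G.dist v u = 2 ∧ G.dist v w = 2

noncomputable def dtdNum {V : Type*} (G : SimpleGraph V) : ℕ :=
  sInf {k | ∃ S : Finset V, IsDTDSet G S ∧ S.card = k}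


def daisy (k : ℕ) (m : Fin k → ℕ) :
    SimpleGraph (Option ((i : Fin k) × Fin (m i))) :=
  SimpleGraph.fromRel (fun a b =>
    match a, b with
    | none, some ⟨i, j⟩ => (j : ℕ) = 0 ∨ (j : ℕ) = m i - 1
    | some ⟨i, j⟩, some ⟨i', j'⟩ => i = i' ∧ (j : ℕ) + 1 = (j' : ℕ)
    | _, _ => False)

section Aux

open Finset

set_option linter.unnecessarySeqFocus false
set_option linter.unreachableTactic false

lemma dtdNum_le {V : Type*} {G : SimpleGraph V} {S : Finset V} (h : IsDTDSet G S) :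
    dtdNum G ≤ S.card :=
  Nat.sInf_le ⟨S, h, rfl⟩

variable {k : ℕ} {m : Fin k → ℕ}

lemma adj_none_iff {i : Fin k} {j : Fin (m i)} :
    (daisy k m).Adj none (some ⟨i, j⟩) ↔ ((j : ℕ) = 0 ∨ (j : ℕ) = m i - 1) := by
  rw [daisy, fromRel_adj]; simp

lemma adj_some_iff {i i' : Fin k} {c : Fin (m i)} {d : Fin (m i')} :
    (daisy k m).Adj (some ⟨i, c⟩) (some ⟨i', d⟩) ↔
      (i = i' ∧ ((c : ℕ) + 1 = (d : ℕ) ∨ (d : ℕ) + 1 = (c : ℕ))) := by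
  rw [daisy, fromRel_adj]
  constructor
  · rintro ⟨hne, h | h⟩
    · exact ⟨h.1, Or.inl h.2⟩
    · exact ⟨h.1.symm, Or.inr h.2⟩
  · rintro ⟨rfl, h⟩
    refine ⟨?_, ?_⟩
    · simp only [ne_eq, Option.some_inj, Sigma.mk.inj_iff, heq_eq_eq, true_and]
      rintro rfl; omega
    · rcases h with h | h
      · exact Or.inl ⟨rfl, h⟩
      · exact Or.inr ⟨rfl, h⟩

lemma sne {i : Fin k} {a b : Fin (m i)} (h : (a : ℕ) ≠ (b : ℕ)) :
    (some ⟨i, a⟩ : Option ((i : Fin k) × Fin (m i))) ≠ some ⟨i, b⟩ := by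
  simp only [ne_eq, Option.some_inj, Sigma.mk.inj_iff, heq_eq_eq, true_and]
  rintro rfl; omega

lemma adjS {i : Fin k} {a b : Fin (m i)} (h : (a : ℕ) + 1 = (b : ℕ)) :
    (daisy k m).Adj (some ⟨i, a⟩) (some ⟨i, b⟩) := adj_some_iff.2 ⟨rfl, Or.inl h⟩

lemma adjS' {i : Fin k} {a b : Fin (m i)} (h : (b : ℕ) + 1 = (a : ℕ)) :
    (daisy k m).Adj (some ⟨i, a⟩) (some ⟨i, b⟩) := adj_some_iff.2 ⟨rfl, Or.inr h⟩

lemma adjC {i : Fin k} {j : Fin (m i)} (h : (j : ℕ) = 0 ∨ (j : ℕ) = m i - 1) :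
    (daisy k m).Adj (some ⟨i, j⟩) none := (adj_none_iff.2 h).symm

lemma dist_two' {α : Type*} {G : SimpleGraph α} {v u w : α} (h1 : G.Adj v w) (h2 : G.Adj w u)
    (hne : v ≠ u) (hna : ¬ G.Adj v u) : G.dist v u = 2 := by
  have hle : G.dist v u ≤ 2 := by
    simpa using SimpleGraph.dist_le (Walk.cons h1 (Walk.cons h2 Walk.nil))
  have h0 : G.dist v u ≠ 0 := by
    rw [Ne, SimpleGraph.dist_eq_zero_iff_eq_or_not_reachable]
    push_neg
    exact ⟨hne, ⟨Walk.cons h1 (Walk.cons h2 Walk.nil)⟩⟩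
  have h1' : G.dist v u ≠ 1 := fun h => hna (SimpleGraph.dist_eq_one_iff_adj.mp h)
  omega

lemma distS {i : Fin k} {a b : Fin (m i)} (h : (a : ℕ) + 2 = (b : ℕ)) :
    (daisy k m).dist (some ⟨i, a⟩) (some ⟨i, b⟩) = 2 := by
  have hmid : (a : ℕ) + 1 < m i := by have := b.isLt; omega
  refine dist_two' (w := some ⟨i, ⟨(a : ℕ) + 1, hmid⟩⟩) (adjS rfl) (adjS (by simp only [Fin.val_mk] <;> omega))
    (sne (by omega)) ?_
  rw [adj_some_iff]
  rintro ⟨-, h' | h'⟩ <;> omega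

lemma distS' {i : Fin k} {a b : Fin (m i)} (h : (b : ℕ) + 2 = (a : ℕ)) :
    (daisy k m).dist (some ⟨i, a⟩) (some ⟨i, b⟩) = 2 := by
  rw [SimpleGraph.dist_comm]; exact distS h

lemma distC1 {i : Fin k} {j : Fin (m i)} (h : (j : ℕ) = 1) (h4 : 4 ≤ m i) :
    (daisy k m).dist (some ⟨i, j⟩) none = 2 := by
  have h0 : (0 : ℕ) < m i := by omega
  refine dist_two' (w := some ⟨i, ⟨0, h0⟩⟩) (adjS' (by simp only [Fin.val_mk] <;> omega)) (adjC (Or.inl rfl))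
    (by simp) ?_
  intro hadj
  rcases adj_none_iff.1 hadj.symm with h' | h' <;> omega

lemma distC2 {i : Fin k} {j : Fin (m i)} (h : (j : ℕ) = m i - 2) (h4 : 4 ≤ m i) :
    (daisy k m).dist (some ⟨i, j⟩) none = 2 := by
  have h0 : m i - 1 < m i := by omega
  refine dist_two' (w := some ⟨i, ⟨m i - 1, h0⟩⟩) (adjS (by simp only [Fin.val_mk] <;> omega))
    (adjC (Or.inr (by simp))) (by simp) ?_
  intro hadj
  rcases adj_none_iff.1 hadj.symm with h' | h' <;> omega

def pat (M : ℕ) (j : ℕ) : Prop :=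
  if M % 2 = 1 then (if M = 3 then j = 2 else j % 2 = 1)
  else (j % 4 = 3 ∨ (j % 4 = 0 ∧ 4 ≤ j))

instance (M : ℕ) : DecidablePred (pat M) := fun j => by unfold pat; infer_instance

def Spat (k : ℕ) (m : Fin k → ℕ) : Finset (Option ((i : Fin k) × Fin (m i))) :=
  Finset.insertNone ((univ : Finset (Fin k)).sigma
    (fun i => (univ : Finset (Fin (m i))).filter (fun j => pat (m i) j.val)))

lemma none_mem_Spat : none ∈ Spat k m := Finset.none_mem_insertNone

lemma some_mem_Spat {i : Fin k} {j : Fin (m i)} :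
    some ⟨i, j⟩ ∈ Spat k m ↔ pat (m i) j.val := by
  simp [Spat]

def covered {α : Type*} (G : SimpleGraph α) (S : Finset α) (v : α) : Prop :=
  (∃ u ∈ S, G.Adj v u) ∨
    ∃ u ∈ S, ∃ w ∈ S, u ≠ w ∧ G.dist v u = 2 ∧ G.dist v w = 2

lemma covered_mono {α : Type*} {G : SimpleGraph α} {S T : Finset α} (h : S ⊆ T) {v : α}
    (hc : covered G S v) : covered G T v := by
  rcases hc with ⟨u, hu, ha⟩ | ⟨u, hu, w, hw, h1, h2, h3⟩
  · exact Or.inl ⟨u, h hu, ha⟩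
  · exact Or.inr ⟨u, h hu, w, h hw, h1, h2, h3⟩

lemma cover_some (hm : ∀ i, 2 ≤ m i) (i : Fin k) (j : Fin (m i)) :
    covered (daisy k m) (Spat k m) (some ⟨i, j⟩) := by
  have hM : 2 ≤ m i := hm i
  obtain ⟨n, hn⟩ := j
  by_cases hend : n = 0 ∨ n = m i - 1
  · exact Or.inl ⟨none, none_mem_Spat, adjC (by simpa using hend)⟩
  push_neg at hend
  by_cases hodd : m i % 2 = 1
  · by_cases h3 : m i = 3
    · -- n = 1
      refine Or.inl ⟨some ⟨i, ⟨2, by omega⟩⟩, some_mem_Spat.2 (by simp [pat, h3]),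
        adjS (by simp only [Fin.val_mk] <;> omega)⟩
    · -- m i odd, ≥ 5
      have h5 : 5 ≤ m i := by omega
      by_cases hpar : n % 2 = 1
      · by_cases hn1 : n = 1
        · refine Or.inr ⟨some ⟨i, ⟨3, by omega⟩⟩, some_mem_Spat.2 (by simp [pat, hodd, h3]),
            none, none_mem_Spat, by simp, distS (by simp only [Fin.val_mk] <;> omega), distC1 (by simp only [Fin.val_mk] <;> omega) (by omega)⟩
        · by_cases hn2 : n = m i - 2
          · refine Or.inr ⟨some ⟨i, ⟨m i - 4, by omega⟩⟩,
              some_mem_Spat.2 (by simp [pat, hodd, h3] <;> omega),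
              none, none_mem_Spat, by simp, distS' (by simp only [Fin.val_mk] <;> omega),
              distC2 (by simp only [Fin.val_mk] <;> omega) (by omega)⟩
          · refine Or.inr ⟨some ⟨i, ⟨n - 2, by omega⟩⟩,
              some_mem_Spat.2 (by simp [pat, hodd, h3] <;> omega),
              some ⟨i, ⟨n + 2, by omega⟩⟩,
              some_mem_Spat.2 (by simp [pat, hodd, h3] <;> omega),
              sne (by simp only [Fin.val_mk] <;> omega), distS' (by simp only [Fin.val_mk] <;> omega), distS (by simp only [Fin.val_mk] <;> omega)⟩
      · refine Or.inl ⟨some ⟨i, ⟨n - 1, by omega⟩⟩,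
          some_mem_Spat.2 (by simp [pat, hodd, h3] <;> omega), adjS' (by simp only [Fin.val_mk] <;> omega)⟩
  · -- m i even
    have heven : m i % 2 = 0 := by omega
    have h4' : n % 4 = 0 ∨ n % 4 = 1 ∨ n % 4 = 2 ∨ n % 4 = 3 := by omega
    rcases h4' with h4 | h4 | h4 | h4
    · -- n % 4 = 0, n ≥ 4
      refine Or.inl ⟨some ⟨i, ⟨n - 1, by omega⟩⟩,
        some_mem_Spat.2 (by simp [pat, heven] <;> omega), adjS' (by simp only [Fin.val_mk] <;> omega)⟩
    · by_cases hn1 : n = 1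
      · have hM4 : 4 ≤ m i := by omega
        refine Or.inr ⟨some ⟨i, ⟨3, by omega⟩⟩, some_mem_Spat.2 (by simp [pat, heven]),
          none, none_mem_Spat, by simp, distS (by simp only [Fin.val_mk] <;> omega), distC1 (by simp only [Fin.val_mk] <;> omega) hM4⟩
      · refine Or.inr ⟨some ⟨i, ⟨n - 2, by omega⟩⟩,
          some_mem_Spat.2 (by simp [pat, heven] <;> omega),
          some ⟨i, ⟨n + 2, by omega⟩⟩,
          some_mem_Spat.2 (by simp [pat, heven] <;> omega),
          sne (by simp only [Fin.val_mk] <;> omega), distS' (by simp only [Fin.val_mk] <;> omega), distS (by simp only [Fin.val_mk] <;> omega)⟩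
    · refine Or.inl ⟨some ⟨i, ⟨n + 1, by omega⟩⟩,
        some_mem_Spat.2 (by simp [pat, heven] <;> omega), adjS (by simp only [Fin.val_mk] <;> omega)⟩
    · refine Or.inl ⟨some ⟨i, ⟨n + 1, by omega⟩⟩,
        some_mem_Spat.2 (by simp [pat, heven] <;> omega), adjS (by simp only [Fin.val_mk] <;> omega)⟩

lemma cover_none (hm : ∀ i, 2 ≤ m i) (hne2 : ∃ i, m i % 4 ≠ 2) :
    covered (daisy k m) (Spat k m) none := by
  obtain ⟨i, hi⟩ := hne2
  have hM : 2 ≤ m i := hm i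
  by_cases hodd : m i % 2 = 1
  · by_cases h3 : m i = 3
    · refine Or.inl ⟨some ⟨i, ⟨2, by omega⟩⟩, some_mem_Spat.2 (by simp [pat, h3]),
        adj_none_iff.2 (Or.inr (by simp only [Fin.val_mk] <;> omega))⟩
    · have h5 : 5 ≤ m i := by omega
      refine Or.inr ⟨some ⟨i, ⟨1, by omega⟩⟩, some_mem_Spat.2 (by simp [pat, hodd, h3]),
        some ⟨i, ⟨m i - 2, by omega⟩⟩, some_mem_Spat.2 (by simp [pat, hodd, h3] <;> omega),
        sne (by simp only [Fin.val_mk] <;> omega), ?_, ?_⟩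
      · rw [SimpleGraph.dist_comm]; exact distC1 (by simp) (by omega)
      · rw [SimpleGraph.dist_comm]; exact distC2 (by simp) (by omega)
  · have h0 : m i % 4 = 0 := by omega
    have hM4 : 4 ≤ m i := by omega
    refine Or.inl ⟨some ⟨i, ⟨m i - 1, by omega⟩⟩,
      some_mem_Spat.2 (by simp [pat, show m i % 2 ≠ 1 by omega] <;> omega),
      adj_none_iff.2 (Or.inr (by simp))⟩
lemma fin_filter_card (M : ℕ) (q : ℕ → Prop) [DecidablePred q] :
    ((univ : Finset (Fin M)).filter (fun j => q j.val)).card = ((range M).filter q).card := by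
  apply Finset.card_bij (fun j _ => j.val)
  · intro a ha; simp only [mem_filter, mem_univ, true_and] at ha
    simp [a.isLt, ha]
  · intro a _ b _ h; exact Fin.val_injective h
  · intro b hb
    simp only [mem_filter, mem_range] at hb
    exact ⟨⟨b, hb.1⟩, by simp [hb.2], rfl⟩

lemma card_Spat : (Spat k m).card = (∑ i, ((range (m i)).filter (pat (m i))).card) + 1 := by
  rw [Spat, Finset.card_insertNone, Finset.card_sigma]
  congr 1
  exact Finset.sum_congr rfl fun i _ => fin_filter_card (m i) (pat (m i))

lemma count_odd (M : ℕ) : ((range M).filter (fun j => j % 2 = 1)).card = M / 2 := by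
  induction M with
  | zero => simp
  | succ n ih =>
    rw [range_add_one, filter_insert]
    split_ifs with h
    · rw [card_insert_of_notMem (by simp)]; omega
    · omega

lemma count_p4 (M : ℕ) :
    ((range M).filter (fun j => j % 4 = 3 ∨ (j % 4 = 0 ∧ 4 ≤ j))).card = M / 4 + (M - 1) / 4 := by
  induction M with
  | zero => simp
  | succ n ih =>
    rw [range_add_one, filter_insert]
    split_ifs with h
    · rw [card_insert_of_notMem (by simp)]; omega
    · omega

lemma count_three : ((range 3).filter (fun j => j = 2)).card = 1 := by decide

lemma patcard {M : ℕ} (h : 2 ≤ M) : 2 * ((range M).filter (pat M)).card + 1 ≤ M := by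
  by_cases h2 : M % 2 = 1
  · by_cases h3 : M = 3
    · subst h3
      rw [show ((range 3).filter (pat 3)) = (range 3).filter (fun j => j = 2) from
        filter_congr fun x _ => by simp [pat]]
      rw [count_three]
    · rw [show ((range M).filter (pat M)) = (range M).filter (fun j => j % 2 = 1) from
        filter_congr fun x _ => by simp [pat, h2, h3]]
      rw [count_odd]; omega
  · rw [show ((range M).filter (pat M)) = (range M).filter (fun j => j % 4 = 3 ∨ (j % 4 = 0 ∧ 4 ≤ j)) from
      filter_congr fun x _ => by simp [pat, h2]]
    rw [count_p4]; omega

lemma patcard2 {M : ℕ} (h : M % 4 = 2) : 2 * ((range M).filter (pat M)).card + 2 ≤ M := by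
  rw [show ((range M).filter (pat M)) = (range M).filter (fun j => j % 4 = 3 ∨ (j % 4 = 0 ∧ 4 ≤ j)) from
    filter_congr fun x _ => by simp [pat, show M % 2 ≠ 1 by omega]]
  rw [count_p4]; omega

end Aux

/-- A daisy with k ≥ 2 petals (petal i is a cycle of length m i + 1 through the
central vertex, so the order is n = 1 + ∑ m i) satisfies γ_t^d ≤ (n-1)/2. -/
theorem dtd_daisy_le (k : ℕ) (hk : 2 ≤ k) (m : Fin k → ℕ) (hm : ∀ i, 2 ≤ m i) :
    2 * dtdNum (daisy k m) ≤ ∑ i, m i := by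
  classical
  have hsum2k : 2 * k ≤ ∑ i, m i := by
    calc 2 * k = ∑ _i : Fin k, 2 := by simp [mul_comm]
    _ ≤ ∑ i, m i := Finset.sum_le_sum fun i _ => hm i
  set C : ℕ := ∑ i, ((Finset.range (m i)).filter (pat (m i))).card with hC
  by_cases hE : ∀ i, m i % 4 = 2
  · have hk0 : 0 < k := by omega
    have hm0 : 0 < m ⟨0, hk0⟩ := by have := hm ⟨0, hk0⟩; omega
    set x : Option ((i : Fin k) × Fin (m i)) := some ⟨⟨0, hk0⟩, ⟨0, hm0⟩⟩ with hx
    have hDTD : IsDTDSet (daisy k m) (insert x (Spat k m)) := by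
      rintro (_ | ⟨i, j⟩)
      · left
        exact ⟨x, Finset.mem_insert_self _ _, adj_none_iff.2 (Or.inl rfl)⟩
      · exact covered_mono (Finset.subset_insert _ _) (cover_some hm i j)
    have hle : dtdNum (daisy k m) ≤ (insert x (Spat k m)).card := dtdNum_le hDTD
    have hcard : (insert x (Spat k m)).card ≤ C + 2 := by
      calc (insert x (Spat k m)).card ≤ (Spat k m).card + 1 := Finset.card_insert_le _ _
      _ = C + 2 := by rw [card_Spat]
    have hsum : ∑ i, (2 * ((Finset.range (m i)).filter (pat (m i))).card + 2) ≤ ∑ i, m i :=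
      Finset.sum_le_sum fun i _ => patcard2 (hE i)
    have hexp : ∑ i, (2 * ((Finset.range (m i)).filter (pat (m i))).card + 2)
        = 2 * C + 2 * k := by
      rw [Finset.sum_add_distrib, ← Finset.mul_sum]
      simp [mul_comm, hC]
    rw [hexp] at hsum
    omega
  · push_neg at hE
    obtain ⟨i0, hi0⟩ := hE
    have hDTD : IsDTDSet (daisy k m) (Spat k m) := by
      rintro (_ | ⟨i, j⟩)
      · exact cover_none hm ⟨i0, hi0⟩
      · exact cover_some hm i j
    have hle : dtdNum (daisy k m) ≤ (Spat k m).card := dtdNum_le hDTD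
    have hcard : (Spat k m).card = C + 1 := card_Spat
    have hsum : ∑ i, (2 * ((Finset.range (m i)).filter (pat (m i))).card + 1) ≤ ∑ i, m i :=
      Finset.sum_le_sum fun i _ => patcard (hm i)
    have hexp : ∑ i, (2 * ((Finset.range (m i)).filter (pat (m i))).card + 1)
        = 2 * C + k := by
      rw [Finset.sum_add_distrib, ← Finset.mul_sum]
      simp [mul_comm, hC]
    rw [hexp] at hsum
    omega
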